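/- Let H be an inner product space over ℂ, n ≥ 1, x₁,…,xₙ, y₁,…,yₙ ∈ H, ω₁, ω₂ ∈ ℝ, m ∈ {1,…,n}, a, b ∈ H, r, s ≥ 0. Suppose ‖exp(2ω₁imk)·xₖ − a‖ ≤ r and ‖exp(2ω₂imk)·yₖ − b‖ ≤ s for all k. Then |(1/n)∑ₖ exp(2(ω₂−ω₁)imk)⟨xₖ,yₖ⟩ − ⟨(1/n)∑ₖ exp(2ω₁imk)xₖ, (1/n)∑ₖ exp(2ω₂imk)yₖ⟩| ≤ r·s. -/

import Mathlib

open scoped InnerProductSpace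
open Finset

-- variance bound: sum of ‖u k - mean‖² ≤ sum of ‖u k - a‖²
lemma gruss_var {H : Type*} [NormedAddCommGroup H] [InnerProductSpace ℂ H]
    (n : ℕ) (hn : 1 ≤ n) (F : Finset ℕ) (hF : F.card = n) (u : ℕ → H) (a : H) :
    ∑ k ∈ F, ‖u k - (1 / (n : ℂ)) • ∑ j ∈ F, u j‖ ^ 2 ≤ ∑ k ∈ F, ‖u k - a‖ ^ 2 := by
  set ub : H := (1 / (n : ℂ)) • ∑ j ∈ F, u j with hub
  have hnne : (n : ℂ) ≠ 0 := by
    exact_mod_cast Nat.cast_ne_zero.2 (by omega)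
  have hzero : ∑ k ∈ F, (u k - ub) = 0 := by
    rw [Finset.sum_sub_distrib, Finset.sum_const, hF, hub,
      ← Nat.cast_smul_eq_nsmul ℂ, smul_smul]
    rw [show ((n : ℕ) : ℂ) * (1 / (n : ℂ)) = 1 by field_simp]
    simp
  have hexp : ∀ k ∈ F, ‖u k - a‖ ^ 2
      = ‖u k - ub‖ ^ 2 + 2 * RCLike.re (⟪u k - ub, ub - a⟫_ℂ) + ‖ub - a‖ ^ 2 := by
    intro k _
    have : u k - a = (u k - ub) + (ub - a) := by abel
    rw [this, @norm_add_sq ℂ]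
  rw [Finset.sum_congr rfl hexp]
  rw [Finset.sum_add_distrib, Finset.sum_add_distrib]
  have : ∑ k ∈ F, 2 * RCLike.re (⟪u k - ub, ub - a⟫_ℂ) = 0 := by
    rw [← Finset.mul_sum, ← map_sum, ← sum_inner, hzero]
    simp
  rw [this]
  have : (0:ℝ) ≤ ∑ _k ∈ F, ‖ub - a‖ ^ 2 :=
    Finset.sum_nonneg fun _ _ => sq_nonneg _
  linarith

lemma gruss_aux {H : Type*} [NormedAddCommGroup H] [InnerProductSpace ℂ H]
    (n : ℕ) (hn : 1 ≤ n) (F : Finset ℕ) (hF : F.card = n) (u v : ℕ → H) (a b : H)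
    (r s : ℝ) (hr : 0 ≤ r) (hs : 0 ≤ s)
    (hu : ∀ k ∈ F, ‖u k - a‖ ≤ r) (hv : ∀ k ∈ F, ‖v k - b‖ ≤ s) :
    ‖(1 / (n : ℂ)) * ∑ k ∈ F, ⟪u k, v k⟫_ℂ
      - ⟪(1 / (n : ℂ)) • ∑ k ∈ F, u k, (1 / (n : ℂ)) • ∑ k ∈ F, v k⟫_ℂ‖ ≤ r * s := by
  have hn0 : 0 < (n : ℝ) := by positivity
  have hnne : (n : ℂ) ≠ 0 := by exact_mod_cast Nat.cast_ne_zero.2 (by omega)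
  set ub : H := (1 / (n : ℂ)) • ∑ j ∈ F, u j with hub
  set vb : H := (1 / (n : ℂ)) • ∑ j ∈ F, v j with hvb
  -- key identity
  have hid : (1 / (n : ℂ)) * ∑ k ∈ F, ⟪u k, v k⟫_ℂ - ⟪ub, vb⟫_ℂ
      = (1 / (n : ℂ)) * ∑ k ∈ F, ⟪u k - ub, v k - vb⟫_ℂ := by
    have h1 : ∑ k ∈ F, ⟪u k - ub, v k - vb⟫_ℂ
        = ∑ k ∈ F, ⟪u k, v k⟫_ℂ - ⟪∑ j ∈ F, u j, vb⟫_ℂ - ⟪ub, ∑ j ∈ F, v j⟫_ℂ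
          + (n : ℂ) * ⟪ub, vb⟫_ℂ := by
      simp only [inner_sub_left, inner_sub_right, Finset.sum_sub_distrib,
        ← sum_inner, ← inner_sum, Finset.sum_const, hF, ← Nat.cast_smul_eq_nsmul ℂ,
        inner_smul_left, inner_smul_right, map_div₀, map_one, Complex.conj_natCast]
      ring
    have h2 : ⟪∑ j ∈ F, u j, vb⟫_ℂ = (n : ℂ) * ⟪ub, vb⟫_ℂ := by
      rw [hub, inner_smul_left]
      rw [map_div₀, map_one, Complex.conj_natCast]
      field_simp
    have h3 : ⟪ub, ∑ j ∈ F, v j⟫_ℂ = (n : ℂ) * ⟪ub, vb⟫_ℂ := by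
      rw [hvb, inner_smul_right]
      field_simp
    rw [h1, h2, h3]
    field_simp
    ring
  rw [hid]
  -- bound via Cauchy-Schwarz
  have habs : ‖(1 / (n : ℂ)) * ∑ k ∈ F, ⟪u k - ub, v k - vb⟫_ℂ‖
      ≤ (1 / (n : ℝ)) * ∑ k ∈ F, ‖u k - ub‖ * ‖v k - vb‖ := by
    rw [norm_mul, norm_div, norm_one, Complex.norm_natCast]
    have hbd : ‖∑ k ∈ F, ⟪u k - ub, v k - vb⟫_ℂ‖
        ≤ ∑ k ∈ F, ‖u k - ub‖ * ‖v k - vb‖ := by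
      exact (norm_sum_le _ _).trans (Finset.sum_le_sum fun k _ => norm_inner_le_norm _ _)
    exact mul_le_mul_of_nonneg_left hbd (by positivity)
  refine habs.trans ?_
  set A : ℝ := ∑ k ∈ F, ‖u k - ub‖ * ‖v k - vb‖ with hA
  have hAnn : 0 ≤ A := Finset.sum_nonneg fun k _ => mul_nonneg (norm_nonneg _) (norm_nonneg _)
  have hCS : A ^ 2 ≤ (∑ k ∈ F, ‖u k - ub‖ ^ 2) * ∑ k ∈ F, ‖v k - vb‖ ^ 2 :=
    Finset.sum_mul_sq_le_sq_mul_sq F _ _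
  have hup : ∑ k ∈ F, ‖u k - ub‖ ^ 2 ≤ (n : ℝ) * r ^ 2 := by
    refine (gruss_var n hn F hF u a).trans ?_
    calc ∑ k ∈ F, ‖u k - a‖ ^ 2 ≤ ∑ _k ∈ F, r ^ 2 :=
          Finset.sum_le_sum fun k hk => pow_le_pow_left₀ (norm_nonneg _) (hu k hk) 2
      _ = (n : ℝ) * r ^ 2 := by rw [Finset.sum_const, hF, nsmul_eq_mul]
  have hvp : ∑ k ∈ F, ‖v k - vb‖ ^ 2 ≤ (n : ℝ) * s ^ 2 := by
    refine (gruss_var n hn F hF v b).trans ?_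
    calc ∑ k ∈ F, ‖v k - b‖ ^ 2 ≤ ∑ _k ∈ F, s ^ 2 :=
          Finset.sum_le_sum fun k hk => pow_le_pow_left₀ (norm_nonneg _) (hv k hk) 2
      _ = (n : ℝ) * s ^ 2 := by rw [Finset.sum_const, hF, nsmul_eq_mul]
  have h1 : 0 ≤ ∑ k ∈ F, ‖u k - ub‖ ^ 2 := Finset.sum_nonneg fun k _ => sq_nonneg _
  have h2 : 0 ≤ ∑ k ∈ F, ‖v k - vb‖ ^ 2 := Finset.sum_nonneg fun k _ => sq_nonneg _
  have hnrs : 0 ≤ (n : ℝ) * r * s := by positivity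
  have hA2 : A ^ 2 ≤ ((n : ℝ) * r * s) ^ 2 := by nlinarith
  have hAle : A ≤ (n : ℝ) * r * s := by nlinarith
  rw [div_mul_eq_mul_div, one_mul, div_le_iff₀ hn0]
  linarith

theorem fourier_two_params_gruss {H : Type*} [NormedAddCommGroup H] [InnerProductSpace ℂ H]
    (n : ℕ) (hn : 1 ≤ n) (x y : ℕ → H) (ω₁ ω₂ : ℝ) (m : ℕ) (hm : m ∈ Finset.Icc 1 n)
    (a b : H) (r s : ℝ) (hr : 0 ≤ r) (hs : 0 ≤ s)
    (hx : ∀ k ∈ Finset.Icc 1 n,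
      ‖Complex.exp (2 * (ω₁ : ℂ) * Complex.I * (m : ℂ) * (k : ℂ)) • x k - a‖ ≤ r)
    (hy : ∀ k ∈ Finset.Icc 1 n,
      ‖Complex.exp (2 * (ω₂ : ℂ) * Complex.I * (m : ℂ) * (k : ℂ)) • y k - b‖ ≤ s) :
    ‖
        ((1 / (n : ℂ)) * ∑ k ∈ Finset.Icc 1 n,
            Complex.exp (2 * ((ω₂ : ℂ) - (ω₁ : ℂ)) * Complex.I * (m : ℂ) * (k : ℂ))
              * ⟪x k, y k⟫_ℂ
          - ⟪(1 / (n : ℂ)) • ∑ k ∈ Finset.Icc 1 n,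
                Complex.exp (2 * (ω₁ : ℂ) * Complex.I * (m : ℂ) * (k : ℂ)) • x k,
              (1 / (n : ℂ)) • ∑ k ∈ Finset.Icc 1 n,
                Complex.exp (2 * (ω₂ : ℂ) * Complex.I * (m : ℂ) * (k : ℂ)) • y k⟫_ℂ)‖
      ≤ r * s := by
  have hcard : (Finset.Icc 1 n).card = n := by rw [Nat.card_Icc]; omega
  have hconv : ∀ k ∈ Finset.Icc 1 n,
      Complex.exp (2 * ((ω₂ : ℂ) - (ω₁ : ℂ)) * Complex.I * (m : ℂ) * (k : ℂ)) * ⟪x k, y k⟫_ℂ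
        = ⟪Complex.exp (2 * (ω₁ : ℂ) * Complex.I * (m : ℂ) * (k : ℂ)) • x k,
            Complex.exp (2 * (ω₂ : ℂ) * Complex.I * (m : ℂ) * (k : ℂ)) • y k⟫_ℂ := by
    intro k _
    rw [inner_smul_left, inner_smul_right, ← mul_assoc]
    congr 1
    rw [← Complex.exp_conj, ← Complex.exp_add]
    congr 1
    have : (starRingEnd ℂ) (2 * (ω₁ : ℂ) * Complex.I * (m : ℂ) * (k : ℂ))
        = 2 * (ω₁ : ℂ) * (-Complex.I) * (m : ℂ) * (k : ℂ) := by
      simp [map_mul, Complex.conj_ofReal, Complex.conj_I, Complex.conj_natCast, map_ofNat]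
    rw [this]
    ring
  rw [Finset.sum_congr rfl hconv]
  exact gruss_aux n hn (Finset.Icc 1 n) hcard _ _ a b r s hr hs hx hy
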